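/- Let f : ℝⁿ → ℝ be continuously differentiable with blockwise Lipschitz constants Lᵢⱼ (i.e., for x, y differing only in block j, ‖∇⁽ⁱ⁾f(x) − ∇⁽ⁱ⁾f(y)‖ ≤ Lᵢⱼ‖x⁽ʲ⁾ − y⁽ʲ⁾‖ and Lᵢⱼ = Lⱼᵢ). Let x, s ∈ ℝⁿ and let x̃ᵢ ∈ ℝⁿ agree with x in block i (x̃ᵢ⁽ⁱ⁾ = x⁽ⁱ⁾). Then Hᵢ := ∫₀¹ ⟨s⁽ⁱ⁾, ∇⁽ⁱ⁾f(x + τ s) − ∇⁽ⁱ⁾f(x̃ᵢ)⟩ dτ satisfies Hᵢ ≤ ‖s⁽ⁱ⁾‖ · Σ_{j=1}^N Lᵢⱼ ( (1/2)‖s⁽ʲ⁾‖ + ‖x⁽ʲ⁾ − x̃ᵢ⁽ʲ⁾‖ ). -/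

import Mathlib

open scoped RealInnerProductSpace
open Finset

section aux
variable {N : ℕ} {n : Fin N → ℕ}

lemma grad_cont (f : PiLp 2 (fun i : Fin N => EuclideanSpace ℝ (Fin (n i))) → ℝ)
    (hf : ContDiff ℝ 1 f) : Continuous (gradient f) := by
  have : Continuous (fderiv ℝ f) := hf.continuous_fderiv one_ne_zero
  exact ((InnerProductSpace.toDual ℝ _).symm.continuous.comp this)

lemma grad_telescope (f : PiLp 2 (fun i : Fin N => EuclideanSpace ℝ (Fin (n i))) → ℝ)
    (L : Fin N → Fin N → ℝ)
    (hLip : ∀ i j, ∀ x y : PiLp 2 (fun i : Fin N => EuclideanSpace ℝ (Fin (n i))),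
      (∀ k, k ≠ j → x k = y k) →
      ‖gradient f x i - gradient f y i‖ ≤ L i j * ‖x j - y j‖)
    (i : Fin N) (a b : PiLp 2 (fun i : Fin N => EuclideanSpace ℝ (Fin (n i)))) :
    ‖gradient f a i - gradient f b i‖ ≤ ∑ j, L i j * ‖a j - b j‖ := by
  classical
  have key : ∀ t : Finset (Fin N),
      ‖gradient f (WithLp.toLp 2 (fun k => if k ∈ t then a k else b k)) i - gradient f b i‖ ≤
        ∑ j ∈ t, L i j * ‖a j - b j‖ := by
    intro t
    refine Finset.induction_on t ?_ ?_
    · simp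
    · intro j t hj ih
      set m : Finset (Fin N) → PiLp 2 (fun i : Fin N => EuclideanSpace ℝ (Fin (n i))) :=
        fun u => WithLp.toLp 2 (fun k => if k ∈ u then a k else b k) with hm
      have hdiff : ∀ k, k ≠ j → m (insert j t) k = m t k := by
        intro k hk
        simp [hm, Finset.mem_insert, hk]
      have h1 : ‖gradient f (m (insert j t)) i - gradient f (m t) i‖ ≤
          L i j * ‖m (insert j t) j - m t j‖ := hLip i j _ _ hdiff
      have h2 : m (insert j t) j = a j := by simp [hm]
      have h3 : m t j = b j := by simp [hm, hj]
      calc ‖gradient f (m (insert j t)) i - gradient f b i‖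
          ≤ ‖gradient f (m (insert j t)) i - gradient f (m t) i‖ +
            ‖gradient f (m t) i - gradient f b i‖ := norm_sub_le_norm_sub_add_norm_sub _ _ _
        _ ≤ L i j * ‖a j - b j‖ + ∑ k ∈ t, L i k * ‖a k - b k‖ := by
            rw [h2, h3] at h1; exact add_le_add h1 ih
        _ = ∑ k ∈ insert j t, L i k * ‖a k - b k‖ := by rw [Finset.sum_insert hj]
  have := key Finset.univ
  simpa using this
end aux

/-- Bound on the asynchrony error term `Hᵢ` in the descent analysis
(inequality (13) of the paper). -/
theorem stmt11 {N : ℕ} {n : Fin N → ℕ}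
    (f : PiLp 2 (fun i : Fin N => EuclideanSpace ℝ (Fin (n i))) → ℝ)
    (hf : ContDiff ℝ 1 f)
    (L : Fin N → Fin N → ℝ) (hL0 : ∀ i j, 0 ≤ L i j)
    (hLsymm : ∀ i j, L i j = L j i)
    (hLip : ∀ i j, ∀ x y : PiLp 2 (fun i : Fin N => EuclideanSpace ℝ (Fin (n i))),
      (∀ k, k ≠ j → x k = y k) →
      ‖gradient f x i - gradient f y i‖ ≤ L i j * ‖x j - y j‖)
    (x s xt : PiLp 2 (fun i : Fin N => EuclideanSpace ℝ (Fin (n i))))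
    (i : Fin N) (hagree : xt i = x i) :
    (∫ τ in (0:ℝ)..1, ⟪s i, gradient f (x + τ • s) i - gradient f xt i⟫) ≤
      ‖s i‖ * ∑ j, L i j * ((1 / 2) * ‖s j‖ + ‖x j - xt j‖) := by
  classical
  have hgc : Continuous (gradient f) := grad_cont f hf
  have hcont : Continuous fun τ : ℝ =>
      ⟪s i, gradient f (x + τ • s) i - gradient f xt i⟫ := by
    apply Continuous.inner continuous_const
    apply Continuous.sub _ continuous_const
    have h1 : Continuous fun τ : ℝ => x + τ • s :=
      continuous_const.add (continuous_id.smul continuous_const)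
    exact ((continuous_apply i).comp (PiLp.continuous_ofLp 2 _)).comp (hgc.comp h1)
  have hpt : ∀ τ ∈ Set.Icc (0:ℝ) 1,
      ⟪s i, gradient f (x + τ • s) i - gradient f xt i⟫ ≤
        ‖s i‖ * ∑ j, L i j * (τ * ‖s j‖ + ‖x j - xt j‖) := by
    intro τ hτ
    have h1 : ⟪s i, gradient f (x + τ • s) i - gradient f xt i⟫ ≤
        ‖s i‖ * ‖gradient f (x + τ • s) i - gradient f xt i‖ :=
      real_inner_le_norm _ _
    have h2 : ‖gradient f (x + τ • s) i - gradient f xt i‖ ≤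
        ∑ j, L i j * ‖(x + τ • s) j - xt j‖ :=
      grad_telescope f L hLip i _ _
    have h3 : ∀ j, ‖(x + τ • s) j - xt j‖ ≤ τ * ‖s j‖ + ‖x j - xt j‖ := by
      intro j
      have he : (x + τ • s) j - xt j = τ • s j + (x j - xt j) := by
        show x j + τ • s j - xt j = τ • s j + (x j - xt j)
        rw [add_comm (x j), add_sub_assoc]
      rw [he]
      calc ‖τ • s j + (x j - xt j)‖ ≤ ‖τ • s j‖ + ‖x j - xt j‖ := norm_add_le _ _
        _ = τ * ‖s j‖ + ‖x j - xt j‖ := by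
            rw [norm_smul, Real.norm_eq_abs, abs_of_nonneg hτ.1]
    calc ⟪s i, gradient f (x + τ • s) i - gradient f xt i⟫
        ≤ ‖s i‖ * ‖gradient f (x + τ • s) i - gradient f xt i‖ := h1
      _ ≤ ‖s i‖ * ∑ j, L i j * ‖(x + τ • s) j - xt j‖ :=
          mul_le_mul_of_nonneg_left h2 (norm_nonneg _)
      _ ≤ ‖s i‖ * ∑ j, L i j * (τ * ‖s j‖ + ‖x j - xt j‖) := by
          apply mul_le_mul_of_nonneg_left _ (norm_nonneg _)
          exact Finset.sum_le_sum fun j _ =>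
            mul_le_mul_of_nonneg_left (h3 j) (hL0 i j)
  have hint1 : IntervalIntegrable
      (fun τ : ℝ => ⟪s i, gradient f (x + τ • s) i - gradient f xt i⟫)
      MeasureTheory.volume 0 1 := hcont.intervalIntegrable _ _
  have hc2 : ∀ j : Fin N, Continuous fun τ : ℝ => L i j * (τ * ‖s j‖ + ‖x j - xt j‖) :=
    fun j => continuous_const.mul ((continuous_id.mul continuous_const).add continuous_const)
  have hint2 : IntervalIntegrable
      (fun τ : ℝ => ‖s i‖ * ∑ j, L i j * (τ * ‖s j‖ + ‖x j - xt j‖))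
      MeasureTheory.volume 0 1 :=
    (continuous_const.mul (continuous_finset_sum _ fun j _ => hc2 j)).intervalIntegrable _ _
  calc (∫ τ in (0:ℝ)..1, ⟪s i, gradient f (x + τ • s) i - gradient f xt i⟫)
      ≤ ∫ τ in (0:ℝ)..1, ‖s i‖ * ∑ j, L i j * (τ * ‖s j‖ + ‖x j - xt j‖) :=
        intervalIntegral.integral_mono_on (by norm_num) hint1 hint2 hpt
    _ = ‖s i‖ * ∑ j, L i j * ((1 / 2) * ‖s j‖ + ‖x j - xt j‖) := by
        rw [intervalIntegral.integral_const_mul]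
        congr 1
        rw [intervalIntegral.integral_finset_sum fun j _ => (hc2 j).intervalIntegrable _ _]
        refine Finset.sum_congr rfl fun j _ => ?_
        rw [intervalIntegral.integral_const_mul]
        congr 1
        have he : (∫ τ in (0:ℝ)..1, (τ * ‖s j‖ + ‖x j - xt j‖)) =
            (∫ τ in (0:ℝ)..1, τ) * ‖s j‖ + (∫ τ in (0:ℝ)..1, ‖x j - xt j‖) := by
          have hi : IntervalIntegrable (fun τ : ℝ => τ * ‖s j‖) MeasureTheory.volume 0 1 :=
            (continuous_id.mul continuous_const).intervalIntegrable _ _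
          rw [intervalIntegral.integral_add hi intervalIntegrable_const,
            intervalIntegral.integral_mul_const]
        rw [he]
        simp [mul_comm]
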